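/- Let E ⊆ ℤ^p be a good semigroup ideal, ν ∈ ℤ^p with ν + ℕ^p ⊆ E, i ∈ {1,…,p}, c ∈ ℤ, and define F = {v ∈ E | v_i = c and v_ℓ ≤ ν_ℓ for all ℓ ≠ i}. Let α ∈ F. Then α is an absolute maximal of E if and only if α_ℓ ≠ ν_ℓ for all ℓ ∈ {1,…,p} and α is a maximal element of F for the componentwise order. -/

import Mathlib

open Finset

def DeltaJ {p : ℕ} (J : Finset (Fin p)) (α : Fin p → ℤ) (E : Set (Fin p → ℤ)) :
    Set (Fin p → ℤ) :=
  {v | v ∈ E ∧ (∀ j ∈ J, v j = α j) ∧ ∀ j ∉ J, α j < v j}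

def Delta {p : ℕ} (α : Fin p → ℤ) (E : Set (Fin p → ℤ)) : Set (Fin p → ℤ) :=
  ⋃ i : Fin p, DeltaJ {i} α E

def GoodIdeal {p : ℕ} (E : Set (Fin p → ℤ)) : Prop :=
  (∃ lam nu : Fin p → ℤ, (∀ v ∈ E, lam ≤ v) ∧ ∀ v, nu ≤ v → v ∈ E) ∧
  (∀ a ∈ E, ∀ b ∈ E, a ⊓ b ∈ E) ∧
  (∀ a ∈ E, ∀ b ∈ E, a ≠ b → ∀ i, a i = b i →
    ∃ η ∈ E, a i < η i ∧ (∀ j, min (a j) (b j) ≤ η j) ∧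
      ∀ j, a j ≠ b j → η j = min (a j) (b j))

def RelMax {p : ℕ} (E : Set (Fin p → ℤ)) (α : Fin p → ℤ) : Prop :=
  α ∈ E ∧ Delta α E = ∅ ∧ ∀ J : Finset (Fin p), 2 ≤ J.card → (DeltaJ J α E).Nonempty

def AbsMax {p : ℕ} (E : Set (Fin p → ℤ)) (β : Fin p → ℤ) : Prop :=
  β ∈ E ∧ ∀ J : Finset (Fin p), J ≠ ∅ → J ≠ Finset.univ → DeltaJ J β E = ∅

theorem stmt13 {p : ℕ} (hp : 2 ≤ p) (E : Set (Fin p → ℤ)) (hE : GoodIdeal E)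
    (nu : Fin p → ℤ) (hnu : ∀ v, nu ≤ v → v ∈ E) (i : Fin p) (c : ℤ)
    (F : Set (Fin p → ℤ))
    (hF : F = {v | v ∈ E ∧ v i = c ∧ ∀ l, l ≠ i → v l ≤ nu l})
    (α : Fin p → ℤ) (hα : α ∈ F) :
    AbsMax E α ↔ ((∀ l, α l ≠ nu l) ∧ ∀ α' ∈ F, α ≤ α' → α = α') := by
  subst hF
  obtain ⟨hαE, hαi, hαle⟩ := hα
  obtain ⟨-, hinf, hE2⟩ := hE
  have hcard : 1 < Fintype.card (Fin p) := by simp; omega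
  constructor
  · rintro ⟨-, habs⟩
    constructor
    · intro l hl
      set w : Fin p → ℤ := fun k => if k = l then α l else max (nu k) (α k) + 1 with hwdef
      have hwE : w ∈ E := by
        apply hnu w
        intro k
        by_cases h : k = l
        · subst h; simp [w, hl]
        · simp only [w, if_neg h]
          have := le_max_left (nu k) (α k); omega
      obtain ⟨m, hm⟩ := Fintype.exists_ne_of_one_lt_card hcard l
      have h1 : ({l} : Finset (Fin p)) ≠ ∅ := by simp
      have h2 : ({l} : Finset (Fin p)) ≠ univ := by
        intro h
        have hmem : m ∈ ({l} : Finset (Fin p)) := h ▸ mem_univ m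
        simp at hmem; exact hm hmem
      have hemp := habs {l} h1 h2
      rw [Set.eq_empty_iff_forall_notMem] at hemp
      refine hemp w ⟨hwE, ?_, ?_⟩
      · intro j hj; simp at hj; subst hj; simp [w]
      · intro j hj
        simp at hj
        simp only [w, if_neg hj]
        have := le_max_right (nu j) (α j); omega
    · rintro α' ⟨hα'E, hα'i, hα'le⟩ hle
      by_contra hne
      set J : Finset (Fin p) := univ.filter (fun j => α j = α' j) with hJ
      have hiJ : i ∈ J := by simp [J, hαi, hα'i]
      obtain ⟨k, hk⟩ : ∃ k, α k ≠ α' k := by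
        by_contra h; push_neg at h; exact hne (funext h)
      have hJne : J ≠ ∅ := ne_empty_of_mem hiJ
      have hJnu : J ≠ univ := by
        intro h
        have hmem : k ∈ J := h ▸ mem_univ k
        simp [J] at hmem; exact hk hmem
      have hemp := habs J hJne hJnu
      rw [Set.eq_empty_iff_forall_notMem] at hemp
      refine hemp α' ⟨hα'E, ?_, ?_⟩
      · intro j hj; simp [J] at hj; omega
      · intro j hj; simp [J] at hj; exact lt_of_le_of_ne (hle j) hj
  · rintro ⟨h1, h2⟩
    refine ⟨hαE, ?_⟩
    intro J hJne hJnu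
    rw [Set.eq_empty_iff_forall_notMem]
    rintro w ⟨hwE, hwJ, hwJ'⟩
    obtain ⟨k, hk⟩ : ∃ k, k ∉ J := by
      by_contra h; push_neg at h; exact hJnu (eq_univ_iff_forall.mpr h)
    have hαw : ∀ l, α l ≤ w l := by
      intro l
      by_cases h : l ∈ J
      · exact (hwJ l h).ge
      · exact (hwJ' l h).le
    set γ : Fin p → ℤ := fun l => if l = i then max (nu i) c else nu l with hγdef
    have hγi : γ i = max (nu i) c := by rw [hγdef]; simp
    have hγE : γ ∈ E := by
      apply hnu γ
      intro l
      by_cases h : l = i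
      · subst h; simp [γ]
      · simp [γ, h]
    have hαγ : ∀ l, α l ≤ γ l := by
      intro l
      by_cases h : l = i
      · subst h; simp only [γ, if_pos rfl, hαi]; exact le_max_right _ _
      · simp only [γ, if_neg h]; exact hαle l h
    have hγnu : ∀ l, l ≠ i → γ l = nu l := by
      intro l hl; simp [γ, hl]
    by_cases hiJ : i ∈ J
    · -- use v = w ⊓ γ
      have hvE : w ⊓ γ ∈ E := hinf w hwE γ hγE
      have hvi : (w ⊓ γ) i = c := by
        have hwi : w i = α i := hwJ i hiJ
        simp only [Pi.inf_apply, hγi, hwi, hαi]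
        omega
      have hvF : w ⊓ γ ∈ {v | v ∈ E ∧ v i = c ∧ ∀ l, l ≠ i → v l ≤ nu l} := by
        refine ⟨hvE, hvi, ?_⟩
        intro l hl
        simp only [Pi.inf_apply]
        have := hγnu l hl
        have := min_le_right (w l) (γ l)
        omega
      have heq := h2 _ hvF (fun l => le_min (hαw l) (hαγ l))
      have hk' : k ≠ i := fun h => hk (h ▸ hiJ)
      have hcon := congrFun heq k
      simp only [Pi.inf_apply] at hcon
      have hwk : α k < w k := hwJ' k hk
      have hγk : γ k = nu k := hγnu k hk'
      have hαk : α k ≤ nu k := hαle k hk'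
      have hαk' : α k ≠ nu k := h1 k
      omega
    · -- use property E2
      obtain ⟨j, hj⟩ := Finset.nonempty_iff_ne_empty.mpr hJne
      have hji : j ≠ i := fun h => hiJ (h ▸ hj)
      have hαnw : α ≠ w := by
        intro h
        have := hwJ' k hk
        rw [h] at this; omega
      have hαjw : α j = w j := (hwJ j hj).symm
      obtain ⟨η, hηE, hηj, hηge, hηeq⟩ := hE2 α hαE w hwE hαnw j hαjw
      have hηα : ∀ l, α l ≤ η l := by
        intro l
        have := hηge l
        have := hαw l
        omega
      have hηi : η i = α i := by
        have hne : α i ≠ w i := by have := hwJ' i hiJ; omega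
        have := hηeq i hne
        have := hαw i
        omega
      have hvE : η ⊓ γ ∈ E := hinf η hηE γ hγE
      have hvF : η ⊓ γ ∈ {v | v ∈ E ∧ v i = c ∧ ∀ l, l ≠ i → v l ≤ nu l} := by
        refine ⟨hvE, ?_, ?_⟩
        · simp only [Pi.inf_apply, hγi, hηi, hαi]
          omega
        · intro l hl
          simp only [Pi.inf_apply]
          have := hγnu l hl
          have := min_le_right (η l) (γ l)
          omega
      have heq := h2 _ hvF (fun l => le_min (hηα l) (hαγ l))
      have hcon := congrFun heq j
      simp only [Pi.inf_apply] at hcon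
      have hγj : γ j = nu j := hγnu j hji
      have hαj : α j ≤ nu j := hαle j hji
      have hαj' : α j ≠ nu j := h1 j
      omega
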